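/- Let f : ℝⁿ → ℝ be Lipschitz continuous on a neighborhood U of a point x and quasidifferentiable at every point of U, with a quasidifferential mapping u ↦ [A(u), B(u)] defined on U that is outer semicontinuous at x. Then ∂_Cl f(x) ⊆ A(x) + B(x), where ∂_Cl f(x) is the Clarke subdifferential of f at x. -/

import Mathlib

open Filter Topology Set Pointwise RealInnerProductSpace

/-- Dini directional differentiability of `f` at `x` with directional derivative `f'`. -/
def HasDiniDerivE {n : ℕ} (f : EuclideanSpace ℝ (Fin n) → ℝ) (x : EuclideanSpace ℝ (Fin n))
    (f' : EuclideanSpace ℝ (Fin n) → ℝ) : Prop :=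
  ∀ h, Tendsto (fun t : ℝ => (f (x + t • h) - f x) / t) (𝓝[>] (0 : ℝ)) (𝓝 (f' h))

/-- `[A, B]` is a quasidifferential of `f : ℝⁿ → ℝ` at `x` (with the Euclidean pairing),
with Dini directional derivative `f'`. -/
def IsQuasidiffE {n : ℕ} (f : EuclideanSpace ℝ (Fin n) → ℝ) (x : EuclideanSpace ℝ (Fin n))
    (f' : EuclideanSpace ℝ (Fin n) → ℝ) (A B : Set (EuclideanSpace ℝ (Fin n))) : Prop :=
  A.Nonempty ∧ B.Nonempty ∧ Convex ℝ A ∧ Convex ℝ B ∧ IsCompact A ∧ IsCompact B ∧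
    HasDiniDerivE f x f' ∧
    ∀ h, f' h = sSup ((fun v => ⟪v, h⟫) '' A) + sInf ((fun w => ⟪w, h⟫) '' B)

/-- The Clarke generalized directional derivative
`f°(x,h) = limsup_{u→x, t→0+} (f(u+th) − f(u))/t`. -/
noncomputable def clarkeDirDeriv {n : ℕ} (f : EuclideanSpace ℝ (Fin n) → ℝ)
    (x h : EuclideanSpace ℝ (Fin n)) : ℝ :=
  Filter.limsup (fun q : EuclideanSpace ℝ (Fin n) × ℝ => (f (q.1 + q.2 • h) - f q.1) / q.2)
    ((𝓝 x) ×ˢ (𝓝[>] (0 : ℝ)))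

lemma dini_mvt {g g' : ℝ → ℝ} {t C : ℝ} (ht : 0 < t)
    (hg : ContinuousOn g (Icc 0 t))
    (hg' : ∀ s ∈ Ico 0 t,
      Tendsto (fun τ : ℝ => (g (s + τ) - g s) / τ) (𝓝[>] (0 : ℝ)) (𝓝 (g' s)))
    (hC : ∀ s ∈ Ico 0 t, g' s ≤ C) : g t - g 0 ≤ C * t := by
  have key : ∀ ⦃y⦄, y ∈ Icc (0:ℝ) t → g y ≤ g 0 + C * y := by
    apply image_le_of_liminf_slope_right_le_deriv_boundary hg
    · simp
    · exact (continuousOn_const.add (continuousOn_const.mul continuousOn_id))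
    · intro s hs
      simpa using (((hasDerivWithinAt_id s (Ici s)).const_mul C).const_add (g 0))
    · intro s hs r hr
      have hmap : Tendsto (fun z : ℝ => z - s) (𝓝[>] s) (𝓝[>] (0:ℝ)) := by
        apply tendsto_nhdsWithin_of_tendsto_nhds_of_eventually_within
        · have : Tendsto (fun z : ℝ => z - s) (𝓝 s) (𝓝 (s - s)) :=
            (continuous_id.sub continuous_const).tendsto s
          simpa using this.mono_left nhdsWithin_le_nhds
        · exact eventually_nhdsWithin_of_forall fun z hz => mem_Ioi.2 (sub_pos.2 (mem_Ioi.1 hz))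
      have hslope : Tendsto (fun z : ℝ => slope g s z) (𝓝[>] s) (𝓝 (g' s)) := by
        have := (hg' s hs).comp hmap
        refine this.congr fun z => ?_
        simp [slope_def_field, Function.comp]
      have hlt : g' s < r := lt_of_le_of_lt (hC s hs) hr
      exact (hslope.eventually_lt_const hlt).frequently
  have := key (right_mem_Icc.2 ht.le)
  linarith

lemma sup_thickening_bound {n : ℕ} (h : EuclideanSpace ℝ (Fin n))
    {S : Set (EuclideanSpace ℝ (Fin n))} (hScp : IsCompact S)
    {η : ℝ} {v' : EuclideanSpace ℝ (Fin n)} (hv' : v' ∈ Metric.thickening η S) :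
    ⟪v', h⟫ ≤ sSup ((fun v => ⟪v, h⟫) '' S) + η * ‖h‖ := by
  obtain ⟨a, ha, hdist⟩ := Metric.mem_thickening_iff.1 hv'
  have hbdd : BddAbove ((fun v => ⟪v, h⟫) '' S) :=
    (hScp.image (continuous_id.inner continuous_const)).bddAbove
  have h1 : ⟪a, h⟫ ≤ sSup ((fun v => ⟪v, h⟫) '' S) := le_csSup hbdd (mem_image_of_mem _ ha)
  have h2 : ⟪v' - a, h⟫ ≤ η * ‖h‖ := by
    calc ⟪v' - a, h⟫ ≤ ‖v' - a‖ * ‖h‖ := real_inner_le_norm _ _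
    _ ≤ η * ‖h‖ := by
        have : ‖v' - a‖ < η := by rw [← dist_eq_norm]; exact hdist
        exact mul_le_mul_of_nonneg_right this.le (norm_nonneg _)
  have : ⟪v', h⟫ = ⟪a, h⟫ + ⟪v' - a, h⟫ := by
    rw [← inner_add_left, add_sub_cancel]
  linarith

/-- for a locally Lipschitz function with an outer semicontinuous
quasidifferential mapping, the Clarke subdifferential is contained in the
quasidifferential sum `A(x) + B(x)`. -/
theorem clarke_subdiff_subset_quasidiff_sum
    (n : ℕ) (f : EuclideanSpace ℝ (Fin n) → ℝ) (x : EuclideanSpace ℝ (Fin n))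
    (U : Set (EuclideanSpace ℝ (Fin n))) (hU : U ∈ 𝓝 x)
    (L : NNReal) (hLip : LipschitzOnWith L f U)
    (d : EuclideanSpace ℝ (Fin n) → EuclideanSpace ℝ (Fin n) → ℝ)
    (A B : EuclideanSpace ℝ (Fin n) → Set (EuclideanSpace ℝ (Fin n)))
    (hquasi : ∀ u ∈ U, IsQuasidiffE f u (d u) (A u) (B u))
    (hoscA : ∀ V : Set (EuclideanSpace ℝ (Fin n)), IsOpen V → A x ⊆ V →
      ∃ δ > (0 : ℝ), ∀ u, ‖u - x‖ < δ → A u ⊆ V)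
    (hoscB : ∀ V : Set (EuclideanSpace ℝ (Fin n)), IsOpen V → B x ⊆ V →
      ∃ δ > (0 : ℝ), ∀ u, ‖u - x‖ < δ → B u ⊆ V) :
    ∀ v : EuclideanSpace ℝ (Fin n),
      (∀ h : EuclideanSpace ℝ (Fin n), ⟪v, h⟫ ≤ clarkeDirDeriv f x h) → v ∈ A x + B x := by
  classical
  have hxU : x ∈ U := mem_of_mem_nhds hU
  obtain ⟨hAne, hBne, hAconv, hBconv, hAcp, hBcp, _, _⟩ := hquasi x hxU
  obtain ⟨δ₀, hδ₀, hball⟩ := Metric.mem_nhds_iff.1 hU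
  -- Step B : the Clarke derivative is bounded by the support function of A x + B x
  have keyB : ∀ h : EuclideanSpace ℝ (Fin n), clarkeDirDeriv f x h ≤
      sSup ((fun v => ⟪v, h⟫) '' A x) + sSup ((fun v => ⟪v, h⟫) '' B x) := by
    intro h
    set σA := sSup ((fun v => ⟪v, h⟫) '' A x) with hσA
    set σB := sSup ((fun v => ⟪v, h⟫) '' B x) with hσB
    apply le_of_forall_pos_le_add
    intro ε hε
    set η : ℝ := ε / (2 * (‖h‖ + 1)) with hηdef
    have hh1 : (0:ℝ) < ‖h‖ + 1 := by positivity
    have hη : 0 < η := by positivity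
    have hηh : η * ‖h‖ ≤ ε / 2 := by
      rw [hηdef, div_mul_eq_mul_div, div_le_div_iff₀ (by positivity) two_pos]
      nlinarith [norm_nonneg h]
    obtain ⟨δA, hδA, hA⟩ := hoscA (Metric.thickening η (A x)) Metric.isOpen_thickening
      (Metric.self_subset_thickening hη _)
    obtain ⟨δB, hδB, hB⟩ := hoscB (Metric.thickening η (B x)) Metric.isOpen_thickening
      (Metric.self_subset_thickening hη _)
    set δ : ℝ := min δ₀ (min δA δB) with hδdef
    have hδ : 0 < δ := lt_min hδ₀ (lt_min hδA hδB)
    -- pointwise bound on the Dini derivative near x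
    have hpt : ∀ w : EuclideanSpace ℝ (Fin n), ‖w - x‖ < δ → d w h ≤ σA + σB + ε := by
      intro w hw
      have hwU : w ∈ U := hball (by
        rw [Metric.mem_ball, dist_eq_norm]
        exact lt_of_lt_of_le hw (min_le_left _ _))
      obtain ⟨hAne', hBne', -, -, hAcp', hBcp', -, hrep⟩ := hquasi w hwU
      rw [hrep h]
      have h1 : sSup ((fun v => ⟪v, h⟫) '' A w) ≤ σA + ε / 2 := by
        apply csSup_le (hAne'.image _)
        rintro _ ⟨v', hv', rfl⟩
        have hmem : v' ∈ Metric.thickening η (A x) :=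
          hA w (lt_of_lt_of_le hw (le_trans (min_le_right _ _) (min_le_left _ _))) hv'
        have := sup_thickening_bound h hAcp hmem
        linarith
      have h2 : sInf ((fun w' => ⟪w', h⟫) '' B w) ≤ σB + ε / 2 := by
        obtain ⟨b, hb⟩ := hBne'
        have hinf : sInf ((fun w' => ⟪w', h⟫) '' B w) ≤ ⟪b, h⟫ :=
          csInf_le (hBcp'.image (continuous_id.inner continuous_const)).bddBelow
            (mem_image_of_mem _ hb)
        have hmem : b ∈ Metric.thickening η (B x) :=
          hB w (lt_of_lt_of_le hw (le_trans (min_le_right _ _) (min_le_right _ _))) hb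
        have := sup_thickening_bound h hBcp hmem
        linarith
      linarith
    set ρ : ℝ := δ / (2 * (‖h‖ + 1)) with hρdef
    have hρ : 0 < ρ := by positivity
    have hρh : ρ * ‖h‖ ≤ δ / 2 := by
      rw [hρdef, div_mul_eq_mul_div, div_le_div_iff₀ (by positivity) two_pos]
      nlinarith [norm_nonneg h]
    -- event set
    have hev1 : ∀ᶠ u in 𝓝 x, ‖u - x‖ < δ / 2 := by
      filter_upwards [Metric.ball_mem_nhds x (half_pos hδ)] with u hu
      rwa [Metric.mem_ball, dist_eq_norm] at hu
    have hev2 : ∀ᶠ t in 𝓝[>] (0:ℝ), t ∈ Ioo 0 ρ :=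
      Ioo_mem_nhdsGT_of_mem ⟨le_refl 0, hρ⟩
    have hevP : ∀ᶠ q : (EuclideanSpace ℝ (Fin n)) × ℝ in (𝓝 x) ×ˢ (𝓝[>] (0:ℝ)),
        ‖q.1 - x‖ < δ / 2 ∧ q.2 ∈ Ioo 0 ρ := Filter.Eventually.prod_mk hev1 hev2
    -- on the event set, points on the segment stay within δ of x
    have hseg : ∀ (u : EuclideanSpace ℝ (Fin n)) (t : ℝ), ‖u - x‖ < δ / 2 → t ∈ Ioo 0 ρ →
        ∀ s ∈ Icc (0:ℝ) t, ‖(u + s • h) - x‖ < δ := by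
      intro u t hu ht s hs
      have h1 : ‖(u + s • h) - x‖ ≤ ‖u - x‖ + s * ‖h‖ := by
        have : (u + s • h) - x = (u - x) + s • h := by abel
        rw [this]
        calc ‖(u - x) + s • h‖ ≤ ‖u - x‖ + ‖s • h‖ := norm_add_le _ _
        _ = ‖u - x‖ + s * ‖h‖ := by rw [norm_smul, Real.norm_of_nonneg hs.1]
      have h2 : s * ‖h‖ ≤ ρ * ‖h‖ :=
        mul_le_mul_of_nonneg_right (hs.2.trans ht.2.le) (norm_nonneg h)
      linarith
    have hsegU : ∀ (u : EuclideanSpace ℝ (Fin n)) (t : ℝ), ‖u - x‖ < δ / 2 → t ∈ Ioo 0 ρ →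
        ∀ s ∈ Icc (0:ℝ) t, (u + s • h) ∈ U := by
      intro u t hu ht s hs
      apply hball
      rw [Metric.mem_ball, dist_eq_norm]
      exact lt_of_lt_of_le (hseg u t hu ht s hs) (min_le_left _ _)
    -- the difference quotient bound
    have hquot : ∀ᶠ q : (EuclideanSpace ℝ (Fin n)) × ℝ in (𝓝 x) ×ˢ (𝓝[>] (0:ℝ)),
        (f (q.1 + q.2 • h) - f q.1) / q.2 ≤ σA + σB + ε := by
      filter_upwards [hevP]
      rintro ⟨u, t⟩ ⟨hu, ht⟩
      simp only at hu ht ⊢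
      set g : ℝ → ℝ := fun s => f (u + s • h) with hgdef
      have hgc : ContinuousOn g (Icc 0 t) := by
        apply hLip.continuousOn.comp
          ((continuous_const.add (continuous_id.smul continuous_const)).continuousOn)
        intro s hs
        exact hsegU u t hu ht s hs
      have hgd : ∀ s ∈ Ico (0:ℝ) t,
          Tendsto (fun τ : ℝ => (g (s + τ) - g s) / τ) (𝓝[>] (0:ℝ)) (𝓝 (d (u + s • h) h)) := by
        intro s hs
        have hwU : (u + s • h) ∈ U := hsegU u t hu ht s ⟨hs.1, hs.2.le⟩
        have := ((hquasi _ hwU).2.2.2.2.2.2.1) h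
        refine this.congr fun τ => ?_
        congr 2
        rw [hgdef]
        simp only
        rw [add_smul, add_assoc]
      have hgC : ∀ s ∈ Ico (0:ℝ) t, d (u + s • h) h ≤ σA + σB + ε := by
        intro s hs
        exact hpt _ (hseg u t hu ht s ⟨hs.1, hs.2.le⟩)
      have := dini_mvt ht.1 hgc hgd hgC
      have hg0 : g 0 = f u := by rw [hgdef]; simp
      rw [div_le_iff₀ ht.1]
      have : g t - g 0 ≤ (σA + σB + ε) * t := this
      rw [hg0] at this
      exact this
    -- coboundedness from below
    have hcob : IsCoboundedUnder (· ≤ ·) ((𝓝 x) ×ˢ (𝓝[>] (0:ℝ)))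
        (fun q : (EuclideanSpace ℝ (Fin n)) × ℝ => (f (q.1 + q.2 • h) - f q.1) / q.2) := by
      apply isCoboundedUnder_le_of_eventually_le _ (x := -(L * ‖h‖))
      filter_upwards [hevP]
      rintro ⟨u, t⟩ ⟨hu, ht⟩
      simp only at hu ht ⊢
      have huU : u ∈ U := by
        have := hsegU u t hu ht 0 ⟨le_refl 0, ht.1.le⟩
        simpa using this
      have hutU : (u + t • h) ∈ U := hsegU u t hu ht t ⟨ht.1.le, le_refl t⟩
      have hd : dist (f (u + t • h)) (f u) ≤ L * dist (u + t • h) u :=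
        hLip.dist_le_mul _ hutU _ huU
      have hdist : dist (u + t • h) u = t * ‖h‖ := by
        rw [dist_eq_norm]
        have : (u + t • h) - u = t • h := by abel
        rw [this, norm_smul, Real.norm_of_nonneg ht.1.le]
      rw [hdist] at hd
      have habs : |f (u + t • h) - f u| ≤ L * (t * ‖h‖) := by
        rwa [Real.dist_eq] at hd
      have hlow : -(L * ‖h‖) * t ≤ f (u + t • h) - f u := by
        have := (abs_le.1 habs).1
        nlinarith
      rw [le_div_iff₀ ht.1]
      exact hlow
    exact limsup_le_of_le hcob hquot
  -- Step C : separation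
  intro v hv
  by_contra hvS
  have hconv : Convex ℝ (A x + B x) := hAconv.add hBconv
  have hclosed : IsClosed (A x + B x) := (hAcp.add hBcp).isClosed
  obtain ⟨φ, u₀, hS, hvu⟩ := geometric_hahn_banach_closed_point hconv hclosed hvS
  obtain ⟨w, hw⟩ := (InnerProductSpace.toDual ℝ (EuclideanSpace ℝ (Fin n))).surjective φ
  have hφ : ∀ y : EuclideanSpace ℝ (Fin n), φ y = ⟪w, y⟫ := by
    intro y
    rw [← hw]
    rfl
  have hub : ∀ a ∈ A x, ∀ b ∈ B x, ⟪a, w⟫ + ⟪b, w⟫ < u₀ := by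
    intro a ha b hb
    have := hS (a + b) (add_mem_add ha hb)
    rw [hφ, inner_add_right] at this
    rw [real_inner_comm a w, real_inner_comm b w] at this
    exact this
  have h1 : ∀ b ∈ B x, sSup ((fun v => ⟪v, w⟫) '' A x) ≤ u₀ - ⟪b, w⟫ := by
    intro b hb
    apply csSup_le (Set.Nonempty.image _ hAne)
    rintro _ ⟨a, ha, rfl⟩
    linarith [hub a ha b hb]
  have h2 : sSup ((fun v => ⟪v, w⟫) '' B x) ≤ u₀ - sSup ((fun v => ⟪v, w⟫) '' A x) := by
    apply csSup_le (Set.Nonempty.image _ hBne)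
    rintro _ ⟨b, hb, rfl⟩
    linarith [h1 b hb]
  have h3 := (hv w).trans (keyB w)
  have h4 : ⟪v, w⟫ = φ v := by rw [hφ]; exact real_inner_comm w v
  linarith [hvu, h3, h2, h4 ▸ hvu]
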